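/- There exists a constant C > 0 such that uniformly for all nonzero complex z, |z·j_κ(z)| ≤ C·e^{|Im z|}·(|z|/(1+|z|))^{κ+1}. -/

import Mathlib

open Complex MeasureTheory intervalIntegral Set

/-- `z·j_κ(z)`: the spherical Bessel function of the first kind times `z`,
defined by its power series. -/
noncomputable def zj (κ : ℕ) (z : ℂ) : ℂ :=
  ((Real.sqrt Real.pi : ℂ) / 2) * z *
    ∑' ℓ : ℕ, ((-1) ^ ℓ / ((ℓ.factorial : ℂ) * Complex.Gamma ((ℓ : ℂ) + (κ : ℂ) + 3 / 2)))
      * (z / 2) ^ (2 * ℓ + κ)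


noncomputable def J (κ n : ℕ) (z : ℂ) : ℂ :=
  ∫ t in (-1:ℝ)..1, Complex.exp (Complex.I*z*t) * (t:ℂ)^n * (1 - (t:ℂ)^2)^κ

lemma exp_deriv (z : ℂ) (t : ℝ) :
    HasDerivAt (fun s : ℝ => Complex.exp (Complex.I*z*s)) (Complex.I*z*Complex.exp (Complex.I*z*t)) t := by
  have h : HasDerivAt (fun w : ℂ => Complex.exp (Complex.I*z*w)) (Complex.I*z*Complex.exp (Complex.I*z*(t:ℂ))) (t:ℂ) := by
    simpa [mul_comm] using ((hasDerivAt_id (t:ℂ)).const_mul (Complex.I*z)).cexp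
  exact h.comp_ofReal

lemma u_deriv (κ n : ℕ) (t : ℝ) :
    HasDerivAt (fun s : ℝ => (s:ℂ)^n * (1 - (s:ℂ)^2)^κ)
      ((n:ℂ)*(t:ℂ)^(n-1)*(1-(t:ℂ)^2)^κ - 2*(κ:ℂ)*(t:ℂ)^(n+1)*(1-(t:ℂ)^2)^(κ-1)) t := by
  have h1 : HasDerivAt (fun w : ℂ => w^n) ((n:ℂ)*(t:ℂ)^(n-1)) (t:ℂ) := hasDerivAt_pow n _
  have h2 : HasDerivAt (fun w : ℂ => (1-w^2)^κ) ((κ:ℂ)*(1-(t:ℂ)^2)^(κ-1)*(-(2*(t:ℂ)))) (t:ℂ) := by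
    have : HasDerivAt (fun w : ℂ => 1-w^2) (-(2*(t:ℂ))) (t:ℂ) := by
      simpa using (hasDerivAt_pow 2 (t:ℂ)).const_sub 1
    exact this.pow κ
  have := (h1.mul h2).comp_ofReal
  convert this using 1
  · rfl
  · ring

lemma cont_integrand (κ n : ℕ) (z : ℂ) :
    Continuous (fun t : ℝ => Complex.exp (Complex.I*z*t) * (t:ℂ)^n * (1 - (t:ℂ)^2)^κ) := by
  continuity

/-- generic integration by parts -/
lemma ibp_gen (z : ℂ) (u w : ℝ → ℂ) (hu : ∀ x : ℝ, HasDerivAt u (w x) x) (hw : Continuous w)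
    (hcu : Continuous u) :
    Complex.I*z*∫ t in (-1:ℝ)..1, Complex.exp (Complex.I*z*t) * u t
      = Complex.exp (Complex.I*z) * u 1 - Complex.exp (-(Complex.I*z)) * u (-1)
        - ∫ t in (-1:ℝ)..1, Complex.exp (Complex.I*z*t) * w t := by
  have h := intervalIntegral.integral_mul_deriv_eq_deriv_mul
    (a := (-1:ℝ)) (b := (1:ℝ)) (u := u) (v := fun t : ℝ => Complex.exp (Complex.I*z*t))
    (u' := w) (v' := fun t : ℝ => Complex.I*z*Complex.exp (Complex.I*z*t))
    (fun x _ => hu x) (fun x _ => exp_deriv z x)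
    (hw.intervalIntegrable _ _)
    ((continuous_const.mul ((Complex.continuous_exp.comp (by continuity)))).intervalIntegrable _ _)
  have h2 : ∫ t in (-1:ℝ)..1, u t * (Complex.I*z*Complex.exp (Complex.I*z*t))
      = Complex.I*z*∫ t in (-1:ℝ)..1, Complex.exp (Complex.I*z*t) * u t := by
    rw [← intervalIntegral.integral_const_mul]
    congr 1; ext t; ring
  rw [h2] at h
  rw [h]
  have : ∀ t : ℝ, u t * Complex.exp (Complex.I*z*t) = Complex.exp (Complex.I*z*t) * u t := fun t => mul_comm _ _
  simp only [Complex.ofReal_one, Complex.ofReal_neg, mul_one, mul_neg_one]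
  rw [intervalIntegral.integral_congr (g := fun t => Complex.exp (Complex.I*z*t) * w t) (fun t _ => mul_comm _ _)]
  ring_nf



lemma ibpJ (κ n : ℕ) (z : ℂ) :
    Complex.I*z*J κ n z = Complex.exp (Complex.I*z) * (0:ℂ)^κ
      - Complex.exp (-(Complex.I*z)) * (-1:ℂ)^n * (0:ℂ)^κ
      - ((n:ℂ) * J κ (n-1) z - 2*(κ:ℂ) * J (κ-1) (n+1) z) := by
  have h := ibp_gen z (fun s : ℝ => (s:ℂ)^n * (1 - (s:ℂ)^2)^κ)
    (fun t : ℝ => (n:ℂ)*(t:ℂ)^(n-1)*(1-(t:ℂ)^2)^κ - 2*(κ:ℂ)*(t:ℂ)^(n+1)*(1-(t:ℂ)^2)^(κ-1))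
    (u_deriv κ n) (by continuity) (by continuity)
  have e1 : (J κ n z : ℂ) = ∫ t in (-1:ℝ)..1, Complex.exp (Complex.I*z*t) * ((t:ℂ)^n * (1 - (t:ℂ)^2)^κ) := by
    rw [J]; congr 1; ext t; ring
  have e2 : (∫ t in (-1:ℝ)..1, Complex.exp (Complex.I*z*t) *
      ((n:ℂ)*(t:ℂ)^(n-1)*(1-(t:ℂ)^2)^κ - 2*(κ:ℂ)*(t:ℂ)^(n+1)*(1-(t:ℂ)^2)^(κ-1)))
      = (n:ℂ) * J κ (n-1) z - 2*(κ:ℂ) * J (κ-1) (n+1) z := by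
    rw [J, J, ← intervalIntegral.integral_const_mul, ← intervalIntegral.integral_const_mul,
      ← intervalIntegral.integral_sub
        ((continuous_const.fun_mul (cont_integrand κ (n-1) z)).intervalIntegrable _ _)
        ((continuous_const.fun_mul (cont_integrand (κ-1) (n+1) z)).intervalIntegrable _ _)]
    congr 1; ext t; ring
  rw [e1, h, e2]
  push_cast
  ring_nf


lemma norm_exp_Izt (z : ℂ) (t : ℝ) (ht : |t| ≤ 1) :
    ‖Complex.exp (Complex.I*z*t)‖ ≤ Real.exp |z.im| := by
  rw [Complex.norm_exp]
  apply Real.exp_le_exp.2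
  have : (Complex.I*z*(t:ℂ)).re = -z.im * t := by
    simp [Complex.mul_re]
  rw [this]
  calc -z.im * t ≤ |(-z.im) * t| := le_abs_self _
    _ = |z.im| * |t| := by rw [abs_mul, abs_neg]
    _ ≤ |z.im| * 1 := by have := abs_nonneg z.im; nlinarith
    _ = |z.im| := mul_one _

lemma norm_exp_Iz (z : ℂ) : ‖Complex.exp (Complex.I*z)‖ ≤ Real.exp |z.im| := by
  simpa using norm_exp_Izt z 1 (by norm_num)

lemma norm_exp_negIz (z : ℂ) : ‖Complex.exp (-(Complex.I*z))‖ ≤ Real.exp |z.im| := by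
  have := norm_exp_Izt z (-1) (by norm_num)
  simpa using this

lemma Jtriv (κ n : ℕ) (z : ℂ) : ‖J κ n z‖ ≤ 2 * Real.exp |z.im| := by
  have h := intervalIntegral.norm_integral_le_of_norm_le_const
    (C := Real.exp |z.im|) (a := (-1:ℝ)) (b := 1)
    (f := fun t : ℝ => Complex.exp (Complex.I*z*t) * (t:ℂ)^n * (1 - (t:ℂ)^2)^κ) ?_
  · rw [J]
    refine le_trans h ?_
    norm_num
    linarith
  · intro x hx
    rw [Set.uIoc_of_le (by norm_num : (-1:ℝ) ≤ 1)] at hx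
    have hx1 : |x| ≤ 1 := by
      rw [abs_le]; exact ⟨le_of_lt hx.1, hx.2⟩
    have h1 : ‖((x:ℂ))^n‖ ≤ 1 := by
      rw [norm_pow, Complex.norm_real, Real.norm_eq_abs]
      exact pow_le_one₀ (abs_nonneg x) hx1
    have h2 : ‖(1 - (x:ℂ)^2)^κ‖ ≤ 1 := by
      rw [norm_pow]
      apply pow_le_one₀ (norm_nonneg _)
      have : (1 - (x:ℂ)^2) = ((1 - x^2 : ℝ) : ℂ) := by push_cast; ring
      rw [this, Complex.norm_real, Real.norm_eq_abs, abs_le]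
      constructor <;> nlinarith [abs_le.1 hx1]
    calc ‖_ * _ * _‖ = ‖Complex.exp (Complex.I*z*x)‖ * ‖((x:ℂ))^n‖ * ‖(1 - (x:ℂ)^2)^κ‖ := by
          rw [norm_mul, norm_mul]
      _ ≤ Real.exp |z.im| * 1 * 1 := by
          apply mul_le_mul (mul_le_mul (norm_exp_Izt z x hx1) h1 (norm_nonneg _) (Real.exp_pos _).le)
            h2 (norm_nonneg _)
          positivity
      _ = Real.exp |z.im| := by ring

lemma normIzJ (κ n : ℕ) (z : ℂ) : ‖Complex.I*z*J κ n z‖ = ‖z‖ * ‖J κ n z‖ := by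
  rw [norm_mul, norm_mul, Complex.norm_I, one_mul]

lemma Jb (κ : ℕ) : ∀ n : ℕ, ∃ C : ℝ, 0 < C ∧ ∀ z : ℂ, 1 ≤ ‖z‖ →
    ‖J κ n z‖ * ‖z‖^(κ+1) ≤ C * Real.exp |z.im| := by
  induction κ with
  | zero =>
    intro n
    induction n with
    | zero =>
      refine ⟨2, by norm_num, fun z hz => ?_⟩
      have h : Complex.I*z*J 0 0 z = Complex.exp (Complex.I*z) - Complex.exp (-(Complex.I*z)) := by
        rw [ibpJ]; norm_num
      have key : ‖z‖ * ‖J 0 0 z‖ ≤ 2 * Real.exp |z.im| := by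
        rw [← normIzJ, h]
        refine le_trans (norm_sub_le _ _) ?_
        have := norm_exp_Iz z; have := norm_exp_negIz z
        linarith
      calc ‖J 0 0 z‖ * ‖z‖^(0+1) = ‖z‖ * ‖J 0 0 z‖ := by ring
        _ ≤ 2 * Real.exp |z.im| := key
    | succ n ihn =>
      obtain ⟨C, hC, hCb⟩ := ihn
      refine ⟨2 + (n+1)*C, by positivity, fun z hz => ?_⟩
      have h : Complex.I*z*J 0 (n+1) z = Complex.exp (Complex.I*z)
          - Complex.exp (-(Complex.I*z)) * (-1:ℂ)^(n+1) - ((n:ℂ)+1) * J 0 n z := by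
        rw [ibpJ]; push_cast; ring_nf
      have hJn : ‖J 0 n z‖ ≤ C * Real.exp |z.im| := by
        calc ‖J 0 n z‖ = ‖J 0 n z‖ * 1 := (mul_one _).symm
          _ ≤ ‖J 0 n z‖ * ‖z‖^(0+1) := by gcongr; simpa using hz
          _ ≤ C * Real.exp |z.im| := hCb z hz
      have key : ‖z‖ * ‖J 0 (n+1) z‖ ≤ (2 + (n+1)*C) * Real.exp |z.im| := by
        rw [← normIzJ, h]
        refine le_trans (norm_sub_le _ _) ?_
        have b1 : ‖Complex.exp (Complex.I*z) - Complex.exp (-(Complex.I*z)) * (-1:ℂ)^(n+1)‖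
            ≤ 2 * Real.exp |z.im| := by
          refine le_trans (norm_sub_le _ _) ?_
          have := norm_exp_Iz z; have := norm_exp_negIz z
          rw [norm_mul, norm_pow, norm_neg, norm_one, one_pow, mul_one]
          linarith
        have b2 : ‖((n:ℂ)+1) * J 0 n z‖ ≤ (n+1) * (C * Real.exp |z.im|) := by
          rw [norm_mul]
          have h1 : ‖((n:ℂ)+1)‖ = (n:ℝ)+1 := by norm_cast
          rw [h1]
          have hn : (0:ℝ) ≤ (n:ℝ)+1 := by positivity
          exact mul_le_mul_of_nonneg_left hJn hn
        calc _ ≤ 2 * Real.exp |z.im| + (n+1) * (C * Real.exp |z.im|) := add_le_add b1 b2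
          _ = (2 + (n+1)*C) * Real.exp |z.im| := by ring
      calc ‖J 0 (n+1) z‖ * ‖z‖^(0+1) = ‖z‖ * ‖J 0 (n+1) z‖ := by ring
        _ ≤ (2 + (n+1)*C) * Real.exp |z.im| := key
  | succ κ ihκ =>
    intro n
    induction n with
    | zero =>
      obtain ⟨C, hC, hCb⟩ := ihκ 1
      refine ⟨2*(κ+1)*C, by positivity, fun z hz => ?_⟩
      have h : Complex.I*z*J (κ+1) 0 z = 2*((κ:ℂ)+1) * J κ 1 z := by
        rw [ibpJ]; push_cast; simp [zero_pow (Nat.succ_ne_zero κ)]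
      have key : ‖z‖ * ‖J (κ+1) 0 z‖ = 2*((κ:ℝ)+1) * ‖J κ 1 z‖ := by
        rw [← normIzJ, h, norm_mul]
        have : ‖2*((κ:ℂ)+1)‖ = 2*((κ:ℝ)+1) := by norm_cast
        rw [this]
      calc ‖J (κ+1) 0 z‖ * ‖z‖^(κ+1+1) = (‖z‖ * ‖J (κ+1) 0 z‖) * ‖z‖^(κ+1) := by ring
        _ = (2*((κ:ℝ)+1)) * (‖J κ 1 z‖ * ‖z‖^(κ+1)) := by rw [key]; ring
        _ ≤ (2*((κ:ℝ)+1)) * (C * Real.exp |z.im|) :=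
            mul_le_mul_of_nonneg_left (hCb z hz) (by positivity)
        _ = 2*(κ+1)*C * Real.exp |z.im| := by ring
    | succ n ihn =>
      obtain ⟨C1, hC1, hC1b⟩ := ihn
      obtain ⟨C2, hC2, hC2b⟩ := ihκ (n+2)
      refine ⟨(n+1)*C1 + 2*(κ+1)*C2, by positivity, fun z hz => ?_⟩
      have hz0 : (0:ℝ) < ‖z‖ := lt_of_lt_of_le one_pos hz
      have h : Complex.I*z*J (κ+1) (n+1) z
          = -(((n:ℂ)+1) * J (κ+1) n z - 2*((κ:ℂ)+1) * J κ (n+2) z) := by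
        rw [ibpJ]; push_cast; simp [zero_pow (Nat.succ_ne_zero κ)]
      have key : ‖z‖ * ‖J (κ+1) (n+1) z‖
          ≤ ((n:ℝ)+1)*‖J (κ+1) n z‖ + 2*((κ:ℝ)+1)*‖J κ (n+2) z‖ := by
        rw [← normIzJ, h, norm_neg]
        refine le_trans (norm_sub_le _ _) ?_
        rw [norm_mul, norm_mul]
        have e1 : ‖((n:ℂ)+1)‖ = (n:ℝ)+1 := by norm_cast
        have e2 : ‖2*((κ:ℂ)+1)‖ = 2*((κ:ℝ)+1) := by norm_cast
        rw [e1, e2]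
      have hpow : ‖z‖^(κ+1) ≤ ‖z‖^(κ+1+1) := pow_le_pow_right₀ hz (by omega)
      have t1 : ‖J (κ+1) n z‖ * ‖z‖^(κ+1) ≤ C1 * Real.exp |z.im| :=
        le_trans (mul_le_mul_of_nonneg_left hpow (norm_nonneg _)) (hC1b z hz)
      have t2 : ‖J κ (n+2) z‖ * ‖z‖^(κ+1) ≤ C2 * Real.exp |z.im| := hC2b z hz
      calc ‖J (κ+1) (n+1) z‖ * ‖z‖^(κ+1+1) = (‖z‖ * ‖J (κ+1) (n+1) z‖) * ‖z‖^(κ+1) := by ring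
        _ ≤ (((n:ℝ)+1)*‖J (κ+1) n z‖ + 2*((κ:ℝ)+1)*‖J κ (n+2) z‖) * ‖z‖^(κ+1) :=
            mul_le_mul_of_nonneg_right key (by positivity)
        _ = ((n:ℝ)+1)*(‖J (κ+1) n z‖ * ‖z‖^(κ+1)) + 2*((κ:ℝ)+1)*(‖J κ (n+2) z‖ * ‖z‖^(κ+1)) := by
            ring
        _ ≤ ((n:ℝ)+1)*(C1 * Real.exp |z.im|) + 2*((κ:ℝ)+1)*(C2 * Real.exp |z.im|) :=
            add_le_add (mul_le_mul_of_nonneg_left t1 (by positivity))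
              (mul_le_mul_of_nonneg_left t2 (by positivity))
        _ = ((n+1)*C1 + 2*(κ+1)*C2) * Real.exp |z.im| := by ring


noncomputable def B (ℓ κ : ℕ) : ℝ := ∫ t in (-1:ℝ)..1, t^(2*ℓ) * (1-t^2)^κ

lemma contB (m κ : ℕ) : Continuous (fun t : ℝ => t^m * (1-t^2)^κ) := by continuity

lemma R1 (ℓ κ : ℕ) : (2*(ℓ:ℝ)+1) * B ℓ (κ+1) = (2*(κ:ℝ)+2) * B (ℓ+1) κ := by
  have hderiv : ∀ t : ℝ, HasDerivAt (fun s : ℝ => s^(2*ℓ+1)*(1-s^2)^(κ+1))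
      ((2*(ℓ:ℝ)+1) * (t^(2*ℓ) * (1-t^2)^(κ+1)) - (2*(κ:ℝ)+2) * (t^(2*(ℓ+1)) * (1-t^2)^κ)) t := by
    intro t
    have h1 : HasDerivAt (fun s : ℝ => s^(2*ℓ+1)) ((2*(ℓ:ℝ)+1) * t^(2*ℓ)) t := by
      simpa using hasDerivAt_pow (2*ℓ+1) t
    have h2 : HasDerivAt (fun s : ℝ => (1-s^2)^(κ+1)) (((κ:ℝ)+1)*(1-t^2)^κ*(-(2*t))) t := by
      have h3 : HasDerivAt (fun s : ℝ => 1-s^2) (-(2*t)) t := by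
        simpa using (hasDerivAt_pow 2 t).const_sub 1
      simpa using h3.fun_pow (κ+1)
    have : HasDerivAt (fun s : ℝ => s^(2*ℓ+1)*(1-s^2)^(κ+1)) _ t := h1.fun_mul h2
    convert this using 1
    ring
  have hint : ∫ t in (-1:ℝ)..1, ((2*(ℓ:ℝ)+1) * (t^(2*ℓ) * (1-t^2)^(κ+1))
      - (2*(κ:ℝ)+2) * (t^(2*(ℓ+1)) * (1-t^2)^κ)) = 0 := by
    rw [intervalIntegral.integral_eq_sub_of_hasDerivAt (fun x _ => hderiv x)
      (((continuous_const.mul (contB (2*ℓ) (κ+1))).sub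
        (continuous_const.mul (contB (2*(ℓ+1)) κ))).intervalIntegrable _ _)]
    norm_num
  rw [intervalIntegral.integral_sub
      ((continuous_const.fun_mul (contB (2*ℓ) (κ+1))).intervalIntegrable _ _)
      ((continuous_const.fun_mul (contB (2*(ℓ+1)) κ)).intervalIntegrable _ _),
    intervalIntegral.integral_const_mul, intervalIntegral.integral_const_mul] at hint
  rw [B, B]
  linarith

lemma R2 (ℓ κ : ℕ) : B ℓ (κ+1) = B ℓ κ - B (ℓ+1) κ := by
  rw [B, B, B, ← intervalIntegral.integral_sub
    ((contB (2*ℓ) κ).intervalIntegrable _ _) ((contB (2*(ℓ+1)) κ).intervalIntegrable _ _)]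
  congr 1; ext t; ring

lemma R3 (ℓ κ : ℕ) : (2*(ℓ:ℝ)+2*(κ:ℝ)+3) * B (ℓ+1) κ = (2*(ℓ:ℝ)+1) * B ℓ κ := by
  have h1 := R1 ℓ κ
  have h2 := R2 ℓ κ
  nlinarith [h1, h2]

lemma R4 (ℓ κ : ℕ) : (2*(ℓ:ℝ)+2*(κ:ℝ)+3) * B ℓ (κ+1) = (2*(κ:ℝ)+2) * B ℓ κ := by
  have h1 := R1 ℓ κ
  have h2 := R2 ℓ κ
  nlinarith [h1, h2]

noncomputable def G (ℓ κ : ℕ) : ℝ :=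
  Real.Gamma ((ℓ:ℝ)+1/2) * (κ.factorial : ℝ) / Real.Gamma ((ℓ:ℝ)+(κ:ℝ)+3/2)

lemma Gamma_pos (x : ℝ) (hx : 0 < x) : 0 < Real.Gamma x := Real.Gamma_pos_of_pos hx

lemma Bval (κ : ℕ) : ∀ ℓ : ℕ, B ℓ κ = G ℓ κ := by
  induction κ with
  | zero =>
    intro ℓ
    induction ℓ with
    | zero =>
      have hB : B 0 0 = 2 := by
        rw [B]; norm_num
      rw [hB, G]
      have e : ((0:ℕ):ℝ)+((0:ℕ):ℝ)+3/2 = 1/2 + 1 := by norm_num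
      rw [e, Real.Gamma_add_one (by norm_num)]
      have e2 : ((0:ℕ):ℝ)+1/2 = 1/2 := by norm_num
      rw [e2]
      have hp := Gamma_pos (1/2) (by norm_num)
      rw [Nat.factorial_zero]
      field_simp
      simp
    | succ ℓ ihl =>
      have h3 := R3 ℓ 0
      have hGrec : (2*(ℓ:ℝ)+2*(0:ℝ)+3) * G (ℓ+1) 0 = (2*(ℓ:ℝ)+1) * G ℓ 0 := by
        rw [G, G]
        have e1 : ((ℓ:ℝ)+1+1/2) = ((ℓ:ℝ)+1/2) + 1 := by ring
        have e2 : ((ℓ:ℝ)+1+(0:ℝ)+3/2) = ((ℓ:ℝ)+(0:ℝ)+3/2) + 1 := by ring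
        push_cast
        rw [e1, e2, Real.Gamma_add_one (by positivity), Real.Gamma_add_one (by positivity)]
        have hp := Gamma_pos ((ℓ:ℝ)+(0:ℝ)+3/2) (by positivity)
        field_simp
      have hpos : (0:ℝ) < 2*(ℓ:ℝ)+2*(0:ℝ)+3 := by positivity
      have key : (2*(ℓ:ℝ)+2*(0:ℝ)+3) * B (ℓ+1) 0 = (2*(ℓ:ℝ)+2*(0:ℝ)+3) * G (ℓ+1) 0 := by
        push_cast at h3 hGrec ⊢
        rw [ihl] at h3
        linarith
      exact mul_left_cancel₀ (ne_of_gt hpos) key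
  | succ κ ihκ =>
    intro ℓ
    have h4 := R4 ℓ κ
    have hGrec : (2*(ℓ:ℝ)+2*(κ:ℝ)+3) * G ℓ (κ+1) = (2*(κ:ℝ)+2) * G ℓ κ := by
      rw [G, G, Nat.factorial_succ]
      have e2 : ((ℓ:ℝ)+((κ:ℝ)+1)+3/2) = ((ℓ:ℝ)+(κ:ℝ)+3/2) + 1 := by ring
      push_cast
      rw [e2, Real.Gamma_add_one (by positivity)]
      have hp := Gamma_pos ((ℓ:ℝ)+(κ:ℝ)+3/2) (by positivity)
      field_simp
    have hpos : (0:ℝ) < 2*(ℓ:ℝ)+2*(κ:ℝ)+3 := by positivity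
    have : (2*(ℓ:ℝ)+2*(κ:ℝ)+3) * B ℓ (κ+1) = (2*(ℓ:ℝ)+2*(κ:ℝ)+3) * G ℓ (κ+1) := by
      rw [h4, hGrec, ihκ ℓ]
    exact mul_left_cancel₀ (ne_of_gt hpos) this

lemma Gamma_half_fac (ℓ : ℕ) :
    Real.Gamma ((ℓ:ℝ)+1/2) * 4^ℓ * (ℓ.factorial : ℝ) = Real.sqrt Real.pi * ((2*ℓ).factorial : ℝ) := by
  induction ℓ with
  | zero =>
    simp only [Nat.cast_zero, zero_add, pow_zero, Nat.factorial_zero, Nat.cast_one,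
      mul_one, Nat.mul_zero]
    rw [Real.Gamma_one_half_eq]
  | succ ℓ ih =>
    have e1 : ((ℓ:ℝ)+1+1/2) = ((ℓ:ℝ)+1/2) + 1 := by push_cast; ring
    push_cast
    rw [e1, Real.Gamma_add_one (by positivity)]
    have e2 : (2*(ℓ+1)) = (2*ℓ+1) + 1 := by ring
    rw [e2, Nat.factorial_succ, Nat.factorial_succ, Nat.factorial_succ]
    push_cast at ih ⊢
    linear_combination (4*((ℓ:ℝ)+1/2)*((ℓ:ℝ)+1)) * ih

lemma Bval' (κ ℓ : ℕ) : B ℓ κ =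
    Real.Gamma ((ℓ:ℝ)+1/2) * (κ.factorial : ℝ) / Real.Gamma ((ℓ:ℝ)+(κ:ℝ)+3/2) :=
  (Bval κ ℓ).trans rfl



lemma Aodd (k κ : ℕ) : (∫ t in (-1:ℝ)..1, t^(2*k+1)*(1-t^2)^κ) = 0 := by
  have h := intervalIntegral.integral_comp_neg (a := (-1:ℝ)) (b := 1)
    (fun x : ℝ => x^(2*k+1)*(1-x^2)^κ)
  have e : ∀ x : ℝ, (-x)^(2*k+1)*(1-(-x)^2)^κ = -(x^(2*k+1)*(1-x^2)^κ) := by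
    intro x; rw [Odd.neg_pow ⟨k, by omega⟩, neg_sq]; ring
  simp only [e] at h
  rw [intervalIntegral.integral_neg] at h
  norm_num at h
  linarith

/-- the complex interval integral of `t^m (1-t²)^κ` is the real one, coerced -/
lemma Acomplex (m κ : ℕ) :
    (∫ t in (-1:ℝ)..1, (t:ℂ)^m * (1-(t:ℂ)^2)^κ)
      = ((∫ t in (-1:ℝ)..1, t^m*(1-t^2)^κ : ℝ) : ℂ) := by
  rw [← intervalIntegral.integral_ofReal]
  congr 1
  ext t
  push_cast
  ring

lemma zj_eq (κ : ℕ) (z : ℂ) :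
    zj κ z = z^(κ+1) / (2^(κ+1) * (κ.factorial : ℂ)) * J κ 0 z := by
  rcases eq_or_ne z 0 with rfl | hz
  · simp [zj, J, zero_pow (Nat.succ_ne_zero κ)]
  set F : ℕ → ℝ → ℂ := fun m t => (Complex.I*z)^m / (m.factorial : ℂ) * (t:ℂ)^m * (1-(t:ℂ)^2)^κ
    with hF
  have hcont : ∀ m, Continuous (F m) := by
    intro m; apply Continuous.mul; apply Continuous.mul
    · exact continuous_const
    · continuity
    · continuity
  -- pointwise sum
  have hptsum : ∀ t : ℝ, HasSum (fun m => F m t)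
      (Complex.exp (Complex.I*z*t) * (1-(t:ℂ)^2)^κ) := by
    intro t
    have h1 : HasSum (fun m => (Complex.I*z*t)^m / (m.factorial : ℂ)) (Complex.exp (Complex.I*z*t)) := by
      rw [Complex.exp_eq_exp_ℂ]
      exact NormedSpace.expSeries_div_hasSum_exp (Complex.I*z*t)
    have := h1.mul_right ((1-(t:ℂ)^2)^κ)
    convert this using 2 with m
    · rfl
    rw [hF]
    simp only [mul_pow]
    ring
  -- interchange
  set μ : Measure ℝ := volume.restrict (Set.Ioc (-1:ℝ) 1) with hμ
  have hμfin : μ (Set.univ) = 2 := by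
    rw [hμ, Measure.restrict_apply_univ, Real.volume_Ioc]
    norm_num
  have hint : ∀ m, Integrable (F m) μ := by
    intro m
    exact (hcont m).integrableOn_Ioc
  have hnormbound : ∀ m, (∫ t, ‖F m t‖ ∂μ) ≤ 2 * (‖z‖^m / (m.factorial : ℝ)) := by
    intro m
    have hb : ∀ t ∈ Set.Ioc (-1:ℝ) 1, ‖F m t‖ ≤ ‖z‖^m / (m.factorial : ℝ) := by
      intro t ht
      have ht1 : |t| ≤ 1 := by rw [abs_le]; exact ⟨le_of_lt ht.1, ht.2⟩
      rw [hF]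
      simp only [norm_mul, norm_div, norm_pow, Complex.norm_I, one_mul]
      have e1 : ‖((t:ℂ))‖ ≤ 1 := by rw [Complex.norm_real, Real.norm_eq_abs]; exact ht1
      have e2 : ‖1-(t:ℂ)^2‖ ≤ 1 := by
        have : (1 - (t:ℂ)^2) = ((1 - t^2 : ℝ) : ℂ) := by push_cast; ring
        rw [this, Complex.norm_real, Real.norm_eq_abs, abs_le]
        constructor <;> nlinarith [abs_le.1 ht1]
      have e3 : ‖((m.factorial : ℂ))‖ = (m.factorial : ℝ) := by
        rw [Complex.norm_natCast]
      rw [e3]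
      calc ‖z‖^m / (m.factorial:ℝ) * ‖(t:ℂ)‖^m * ‖1-(t:ℂ)^2‖^κ
          ≤ ‖z‖^m / (m.factorial:ℝ) * 1 * 1 := by
            apply mul_le_mul
            apply mul_le_mul le_rfl (pow_le_one₀ (norm_nonneg _) e1) (by positivity) (by positivity)
            exact pow_le_one₀ (norm_nonneg _) e2
            positivity
            positivity
        _ = ‖z‖^m / (m.factorial:ℝ) := by ring
    calc (∫ t, ‖F m t‖ ∂μ) ≤ ∫ _, (‖z‖^m / (m.factorial : ℝ)) ∂μ := by
          apply MeasureTheory.integral_mono_of_nonneg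
          · exact Filter.Eventually.of_forall (fun t => norm_nonneg _)
          · exact integrable_const _
          · rw [hμ]
            refine (MeasureTheory.ae_restrict_iff' measurableSet_Ioc).2 ?_
            exact Filter.Eventually.of_forall hb
      _ = (μ Set.univ).toReal * (‖z‖^m / (m.factorial : ℝ)) := by
          rw [MeasureTheory.integral_const]; simp [Measure.real]
      _ = 2 * (‖z‖^m / (m.factorial : ℝ)) := by rw [hμfin]; norm_num
  have hsummable : Summable (fun m => ∫ t, ‖F m t‖ ∂μ) := by
    apply Summable.of_nonneg_of_le (fun m => by positivity) hnormbound
    exact (Real.summable_pow_div_factorial ‖z‖).mul_left 2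
  have hinterchange := MeasureTheory.hasSum_integral_of_summable_integral_norm hint hsummable
  have htsum_eq : (fun t : ℝ => ∑' m, F m t)
      = fun t : ℝ => Complex.exp (Complex.I*z*t) * (1-(t:ℂ)^2)^κ :=
    funext fun t => (hptsum t).tsum_eq
  rw [htsum_eq] at hinterchange
  -- identify the total integral with J κ 0 z
  have hJ : (∫ t, Complex.exp (Complex.I*z*t) * (1-(t:ℂ)^2)^κ ∂μ) = J κ 0 z := by
    rw [J, intervalIntegral.integral_of_le (by norm_num : (-1:ℝ) ≤ 1), hμ]
    congr 1; ext t; ring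
  rw [hJ] at hinterchange
  -- identify each term
  have hterm : ∀ m, (∫ t, F m t ∂μ) = (Complex.I*z)^m / (m.factorial : ℂ)
      * ((∫ t in (-1:ℝ)..1, t^m*(1-t^2)^κ : ℝ) : ℂ) := by
    intro m
    rw [← Acomplex m κ, intervalIntegral.integral_of_le (by norm_num : (-1:ℝ) ≤ 1), hμ,
      ← MeasureTheory.integral_const_mul]
    congr 1; ext t; rw [hF]; ring
  -- odd terms vanish
  have hodd : ∀ k, (∫ t, F (2*k+1) t ∂μ) = 0 := by
    intro k
    rw [hterm, Aodd]
    simp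
  -- restrict to even terms
  have heven : HasSum (fun k => ∫ t, F (2*k) t ∂μ) (J κ 0 z) := by
    have hinj : Function.Injective (fun k : ℕ => 2*k) := by
      intro a b h
      change 2*a = 2*b at h
      omega
    have hvan : ∀ x ∉ Set.range (fun k : ℕ => 2*k), (∫ t, F x t ∂μ) = 0 := by
      intro x hx
      rcases Nat.even_or_odd x with he | ho
      · exfalso; obtain ⟨r, hr⟩ := he; exact hx ⟨r, by change 2*r = x; omega⟩
      · obtain ⟨r, hr⟩ := ho; rw [hr]; exact hodd r
    exact (Function.Injective.hasSum_iff hinj hvan).2 hinterchange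
  -- coefficient identity
  have hcoeff : ∀ ℓ : ℕ, z^(κ+1) / (2^(κ+1) * (κ.factorial : ℂ)) * (∫ t, F (2*ℓ) t ∂μ)
      = ((Real.sqrt Real.pi : ℂ) / 2) * z *
        (((-1) ^ ℓ / ((ℓ.factorial : ℂ) * Complex.Gamma ((ℓ : ℂ) + (κ : ℂ) + 3 / 2)))
          * (z / 2) ^ (2 * ℓ + κ)) := by
    intro ℓ
    rw [hterm, ← B]
    rw [Bval' κ ℓ]
    have hG : Complex.Gamma ((ℓ : ℂ) + (κ : ℂ) + 3 / 2)
        = ((Real.Gamma ((ℓ:ℝ)+(κ:ℝ)+3/2) : ℝ) : ℂ) := by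
      rw [← Complex.Gamma_ofReal]
      congr 1
      push_cast
      ring
    rw [hG]
    have hI : (Complex.I*z)^(2*ℓ) = (-1)^ℓ * z^(2*ℓ) := by
      rw [mul_pow, pow_mul, Complex.I_sq]
    rw [hI]
    have hγpos : (0:ℝ) < Real.Gamma ((ℓ:ℝ)+(κ:ℝ)+3/2) := Real.Gamma_pos_of_pos (by positivity)
    have hγ : ((Real.Gamma ((ℓ:ℝ)+(κ:ℝ)+3/2) : ℝ) : ℂ) ≠ 0 := by
      exact_mod_cast ne_of_gt hγpos
    have hfacℓ : ((ℓ.factorial : ℕ) : ℂ) ≠ 0 := Nat.cast_ne_zero.2 (Nat.factorial_ne_zero ℓ)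
    have hfacκ : ((κ.factorial : ℂ)) ≠ 0 := Nat.cast_ne_zero.2 (Nat.factorial_ne_zero κ)
    have hfac2ℓ : (((2*ℓ).factorial : ℂ)) ≠ 0 := Nat.cast_ne_zero.2 (Nat.factorial_ne_zero _)
    have hGhf := Gamma_half_fac ℓ
    -- coerce Gamma_half_fac to ℂ
    have hGhfc : ((Real.Gamma ((ℓ:ℝ)+1/2) : ℝ) : ℂ) * 4^ℓ * (ℓ.factorial : ℂ)
        = ((Real.sqrt Real.pi : ℝ) : ℂ) * (((2*ℓ).factorial : ℕ) : ℂ) := by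
      exact_mod_cast congrArg (Complex.ofReal) hGhf
    push_cast
    push_cast at hGhfc
    set a : ℂ := ((Real.Gamma ((ℓ:ℝ)+1/2) : ℝ) : ℂ) with ha
    set g : ℂ := ((Real.Gamma ((ℓ:ℝ)+(κ:ℝ)+3/2) : ℝ) : ℂ) with hgdef
    set sπ : ℂ := ((Real.sqrt Real.pi : ℝ) : ℂ) with hs
    have h4 : (4:ℂ)^ℓ = 2^(2*ℓ) := by rw [pow_mul]; norm_num
    rw [h4] at hGhfc
    have hsub : sπ = a * 2^(2*ℓ) * (ℓ.factorial : ℂ) / (((2*ℓ).factorial : ℕ) : ℂ) := by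
      rw [eq_div_iff hfac2ℓ]
      linear_combination -hGhfc
    rw [hsub]
    field_simp
    ring_nf
    simp only [one_div, inv_pow]; field_simp
  -- endgame
  set w : ℂ := ((Real.sqrt Real.pi : ℂ) / 2) * z with hw
  have hwne : w ≠ 0 := by
    rw [hw]
    apply mul_ne_zero
    · apply div_ne_zero
      · exact_mod_cast ne_of_gt (Real.sqrt_pos.2 Real.pi_pos)
      · norm_num
    · exact hz
  set c : ℂ := z^(κ+1) / (2^(κ+1) * (κ.factorial : ℂ)) with hc
  set term : ℕ → ℂ := fun ℓ =>
    ((-1) ^ ℓ / ((ℓ.factorial : ℂ) * Complex.Gamma ((ℓ : ℂ) + (κ : ℂ) + 3 / 2)))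
      * (z / 2) ^ (2 * ℓ + κ) with hterm2
  have h1 : HasSum (fun ℓ => c * (∫ t, F (2*ℓ) t ∂μ)) (c * J κ 0 z) := heven.mul_left c
  have he : (fun ℓ => c * (∫ t, F (2*ℓ) t ∂μ)) = fun ℓ => w * term ℓ := funext fun ℓ => hcoeff ℓ
  rw [he] at h1
  have h3 := h1.mul_left w⁻¹
  have he2 : (fun ℓ => w⁻¹ * (w * term ℓ)) = term := funext fun ℓ => inv_mul_cancel_left₀ hwne _
  rw [he2] at h3
  rw [zj, ← hw, ← hterm2, h3.tsum_eq, mul_inv_cancel_left₀ hwne, hc]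

/-- the uniform bound `|z·j_κ(z)| ≤ C·e^{|Im z|}·(|z|/(1+|z|))^{κ+1}`
for all nonzero complex `z`. -/
theorem zj_uniform_bound (κ : ℕ) :
    ∃ C : ℝ, 0 < C ∧ ∀ z : ℂ, z ≠ 0 →
      ‖zj κ z‖ ≤ C * Real.exp |z.im| * (‖z‖ / (1 + ‖z‖)) ^ (κ + 1) := by
  obtain ⟨C₀, hC₀, hC₀b⟩ := Jb κ 0
  refine ⟨(2 + C₀) / (κ.factorial : ℝ), by positivity, fun z hz => ?_⟩
  have hr0 : (0:ℝ) ≤ ‖z‖ := norm_nonneg z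
  have hfa : (0:ℝ) < (κ.factorial : ℝ) := by exact_mod_cast κ.factorial_pos
  have hK : (0:ℝ) < (2:ℝ)^(κ+1) := by positivity
  have he : (0:ℝ) < Real.exp |z.im| := Real.exp_pos _
  have hnorm : ‖zj κ z‖ = ‖z‖^(κ+1) / (2^(κ+1) * (κ.factorial : ℝ)) * ‖J κ 0 z‖ := by
    rw [zj_eq κ z, norm_mul, norm_div, norm_pow, norm_mul, norm_pow]
    norm_num [Complex.norm_natCast]
  rcases le_or_gt ‖z‖ 1 with h1 | h1
  · -- small z
    have hJ : ‖J κ 0 z‖ ≤ 2 * Real.exp |z.im| := Jtriv κ 0 z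
    have hratio : ‖z‖ / 2 ≤ ‖z‖ / (1 + ‖z‖) := by
      apply div_le_div_of_nonneg_left hr0 (by positivity)
      linarith
    have hpow : (‖z‖/2)^(κ+1) ≤ (‖z‖ / (1 + ‖z‖))^(κ+1) :=
      pow_le_pow_left₀ (by positivity) hratio _
    calc ‖zj κ z‖ = ‖z‖^(κ+1) / (2^(κ+1) * (κ.factorial : ℝ)) * ‖J κ 0 z‖ := hnorm
      _ ≤ ‖z‖^(κ+1) / (2^(κ+1) * (κ.factorial : ℝ)) * (2 * Real.exp |z.im|) := by
          apply mul_le_mul_of_nonneg_left hJ (by positivity)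
      _ = (2 / (κ.factorial : ℝ)) * Real.exp |z.im| * (‖z‖/2)^(κ+1) := by
          rw [div_pow]
          field_simp
      _ ≤ (2 / (κ.factorial : ℝ)) * Real.exp |z.im| * (‖z‖ / (1 + ‖z‖))^(κ+1) := by
          apply mul_le_mul_of_nonneg_left hpow (by positivity)
      _ ≤ (2 + C₀) / (κ.factorial : ℝ) * Real.exp |z.im| * (‖z‖ / (1 + ‖z‖))^(κ+1) := by
          gcongr
          linarith
  · -- large z
    have hz1 : 1 ≤ ‖z‖ := h1.le
    have hJ : ‖J κ 0 z‖ * ‖z‖^(κ+1) ≤ C₀ * Real.exp |z.im| := hC₀b z hz1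
    have hratio : (1:ℝ) / 2 ≤ ‖z‖ / (1 + ‖z‖) := by
      rw [div_le_div_iff₀ (by norm_num) (by positivity)]
      linarith
    have hpow : ((1:ℝ)/2)^(κ+1) ≤ (‖z‖ / (1 + ‖z‖))^(κ+1) :=
      pow_le_pow_left₀ (by norm_num) hratio _
    calc ‖zj κ z‖ = ‖z‖^(κ+1) / (2^(κ+1) * (κ.factorial : ℝ)) * ‖J κ 0 z‖ := hnorm
      _ = (‖J κ 0 z‖ * ‖z‖^(κ+1)) / (2^(κ+1) * (κ.factorial : ℝ)) := by ring
      _ ≤ (C₀ * Real.exp |z.im|) / (2^(κ+1) * (κ.factorial : ℝ)) := by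
          gcongr
      _ = (C₀ / (κ.factorial : ℝ)) * Real.exp |z.im| * ((1:ℝ)/2)^(κ+1) := by
          rw [div_pow]
          field_simp
          ring
      _ ≤ (C₀ / (κ.factorial : ℝ)) * Real.exp |z.im| * (‖z‖ / (1 + ‖z‖))^(κ+1) := by
          apply mul_le_mul_of_nonneg_left hpow (by positivity)
      _ ≤ (2 + C₀) / (κ.factorial : ℝ) * Real.exp |z.im| * (‖z‖ / (1 + ‖z‖))^(κ+1) := by
          gcongr
          linarith
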